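/- Suppose (σ, u) ∈ P_k(K; ℂ^{3×3}_sym) × P_{k+1}(K; ℂ³) satisfies the homogeneous local HDG equations: (LOC-a) iκ(Aσ, ξ)_K − (u, ∇·ξ)_K = 0 for all ξ ∈ P_k(K; ℂ^{3×3}_sym), and (LOC-b) (∇·σ, w)_K + ⟨τ_K P_M u, w⟩_{∂K} + iκ(ρu, w)_K = 0 for all w ∈ P_{k+1}(K; ℂ³). Then iκ(‖σ‖²_{A,K} − ‖u‖²_{ρ,K}) + ⟨τ_K P_M ū, P_M u⟩_{∂K} = 0; consequently P_M u = 0 on ∂K and ‖σ‖_{A,K} = ‖u‖_{ρ,K}. -/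

import Mathlib

noncomputable section
open MeasureTheory
open scoped Classical Matrix

/-- Euclidean 3-space. -/
abbrev E3 : Type := EuclideanSpace ℝ (Fin 3)
/-- Complex 3-vectors (with pointwise Euclidean norm used via coordinates). -/
abbrev V3 : Type := Fin 3 → ℂ
/-- Real 3-vectors. -/
abbrev V3R : Type := Fin 3 → ℝ
abbrev MatC : Type := Matrix (Fin 3) (Fin 3) ℂ
abbrev MatR : Type := Matrix (Fin 3) (Fin 3) ℝ

/-- A nondegenerate tetrahedron in `ℝ³`, given by its four (affinely independent) vertices. -/
structure Tet : Type where
  v : Fin 4 → E3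
  indep : AffineIndependent ℝ v

namespace Tet

/-- The (closed) tetrahedron. -/
def K (T : Tet) : Set E3 := convexHull ℝ (Set.range T.v)

/-- The diameter `h_K`. -/
def hK (T : Tet) : ℝ := Metric.diam T.K

/-- The inradius `ρ_K`. -/
def inradius (T : Tet) : ℝ := sSup {r : ℝ | ∃ c : E3, Metric.ball c r ⊆ T.K}

/-- The face opposite to the vertex `v i`. -/
def face (T : Tet) (i : Fin 4) : Set E3 := convexHull ℝ (T.v '' {j | j ≠ i})

/-- The outward unit normal on the face opposite to `v i`:  the unit vector orthogonal to
the face and pointing away from the remaining vertex. -/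
def normal (T : Tet) (i : Fin 4) : E3 :=
  if h : ∃ n : E3, ‖n‖ = 1 ∧
      (∀ j k : Fin 4, j ≠ i → k ≠ i → (inner ℝ n (T.v j - T.v k) : ℝ) = 0) ∧
      (inner ℝ n (T.v i - T.v (i.succAbove 0)) : ℝ) < 0
  then h.choose else 0

end Tet

/-- Partial derivative in the `j`-th coordinate direction. -/
def pderiv' (f : E3 → ℂ) (x : E3) (j : Fin 3) : ℂ := fderiv ℝ f x (EuclideanSpace.single j (1:ℝ))
def pderivR (f : E3 → ℝ) (x : E3) (j : Fin 3) : ℝ := fderiv ℝ f x (EuclideanSpace.single j (1:ℝ))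

/-- Gradient matrix `(∇u)_{ij} = ∂_j u_i`. -/
def grad (u : E3 → V3) (x : E3) : MatC := Matrix.of fun i j => pderiv' (fun y => u y i) x j
def gradR (u : E3 → V3R) (x : E3) : MatR := Matrix.of fun i j => pderivR (fun y => u y i) x j

/-- Symmetric gradient `ε(u) = (∇u + (∇u)ᵀ)/2`. -/
def eps (u : E3 → V3) (x : E3) : MatC := (2:ℂ)⁻¹ • (grad u x + (grad u x)ᵀ)
def epsR (u : E3 → V3R) (x : E3) : MatR := (2:ℝ)⁻¹ • (gradR u x + (gradR u x)ᵀ)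

/-- Row-wise divergence of a matrix field. -/
def divM (σ : E3 → MatC) (x : E3) : V3 := fun i => ∑ j, pderiv' (fun y => σ y i j) x j
def divMR (σ : E3 → MatR) (x : E3) : V3R := fun i => ∑ j, pderivR (fun y => σ y i j) x j

/-- Frobenius product `M : N = trace (Nᵀ M)` (bilinear, no conjugation). -/
def frobC (M N : MatC) : ℂ := ∑ a, ∑ b, M a b * N a b
def frobR (M N : MatR) : ℝ := ∑ a, ∑ b, M a b * N a b

/-- Entrywise complex conjugation of a matrix. -/
def mapConj (M : MatC) : MatC := Matrix.of fun a b => starRingEnd ℂ (M a b)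

/-- Product of a complex matrix with a real vector, `(ξ n)_a = Σ_b ξ_{ab} n_b`. -/
def matVecR (ξ : MatC) (n : E3) : V3 := fun a => ∑ b, ξ a b * ((n b : ℝ) : ℂ)
def matVecRR (ξ : MatR) (n : E3) : V3R := fun a => ∑ b, ξ a b * n b

/-- `L²(K)` norm of a vector field (Euclidean norm pointwise). -/
def l2K (T : Tet) (u : E3 → V3) : ℝ := Real.sqrt (∫ x in T.K, ∑ c, ‖u x c‖ ^ 2)
/-- `L²(K)` norm of a matrix field (Frobenius norm pointwise). -/
def l2Km (T : Tet) (M : E3 → MatC) : ℝ := Real.sqrt (∫ x in T.K, ∑ a, ∑ b, ‖M x a b‖ ^ 2)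

/-- Antisymmetric complex matrices. -/
def IsSkew (ξ : MatC) : Prop := ξᵀ = -ξ

/-- Evaluation of a polynomial in three variables at a point of `ℝ³`. -/
def evalP (p : MvPolynomial (Fin 3) ℂ) (x : E3) : ℂ := MvPolynomial.eval (fun j => ((x j : ℝ) : ℂ)) p
def evalPR (p : MvPolynomial (Fin 3) ℝ) (x : E3) : ℝ := MvPolynomial.eval (fun j => x j) p

/-- `u ∈ P_k(·; ℂ³)`: a vector field given by polynomials of total degree `≤ k`. -/
def IsPolyVec (k : ℕ) (u : E3 → V3) : Prop :=
  ∃ p : Fin 3 → MvPolynomial (Fin 3) ℂ, (∀ c, (p c).totalDegree ≤ k) ∧ ∀ x c, u x c = evalP (p c) x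
def IsPolyVecR (k : ℕ) (u : E3 → V3R) : Prop :=
  ∃ p : Fin 3 → MvPolynomial (Fin 3) ℝ, (∀ c, (p c).totalDegree ≤ k) ∧ ∀ x c, u x c = evalPR (p c) x

/-- `σ ∈ P_k(·; ℂ^{3×3}_sym)`: a symmetric-matrix-valued polynomial field of degree `≤ k`. -/
def IsPolyMatSym (k : ℕ) (σ : E3 → MatC) : Prop :=
  (∀ x, (σ x)ᵀ = σ x) ∧
  ∃ p : Fin 3 → Fin 3 → MvPolynomial (Fin 3) ℂ,
    (∀ a b, (p a b).totalDegree ≤ k) ∧ ∀ x a b, σ x a b = evalP (p a b) x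
def IsPolyMatSymR (k : ℕ) (σ : E3 → MatR) : Prop :=
  (∀ x, (σ x)ᵀ = σ x) ∧
  ∃ p : Fin 3 → Fin 3 → MvPolynomial (Fin 3) ℝ,
    (∀ a b, (p a b).totalDegree ≤ k) ∧ ∀ x a b, σ x a b = evalPR (p a b) x

/-- Functions on `∂K` whose restriction to each face of `K` is a `ℂ³`-valued polynomial of
degree `≤ k`. -/
def FacewisePoly (T : Tet) (k : ℕ) (μ : E3 → V3) : Prop :=
  ∀ i : Fin 4, ∃ p : Fin 3 → MvPolynomial (Fin 3) ℂ,
    (∀ c, (p c).totalDegree ≤ k) ∧ ∀ x ∈ T.face i, ∀ c, μ x c = evalP (p c) x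
def FacewisePolyR (T : Tet) (k : ℕ) (μ : E3 → V3R) : Prop :=
  ∀ i : Fin 4, ∃ p : Fin 3 → MvPolynomial (Fin 3) ℝ,
    (∀ c, (p c).totalDegree ≤ k) ∧ ∀ x ∈ T.face i, ∀ c, μ x c = evalPR (p c) x

/-- `Pw = P_M w`:  the `L²(∂K)`-orthogonal projection of `w` onto facewise polynomials of
degree `≤ k` (characterized by membership plus the orthogonality relations). -/
def IsPMProj (T : Tet) (k : ℕ) (w Pw : E3 → V3) : Prop :=
  FacewisePoly T k Pw ∧ ∀ μ : E3 → V3, FacewisePoly T k μ →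
    (∫ x in frontier T.K, ∑ c, (w x c - Pw x c) * starRingEnd ℂ (μ x c) ∂μH[2]) = 0

/-- As `IsPMProj`, with the boundary integral written as the sum of the four face integrals. -/
def IsPMProjF (T : Tet) (k : ℕ) (w Pw : E3 → V3) : Prop :=
  FacewisePoly T k Pw ∧ ∀ μ : E3 → V3, FacewisePoly T k μ →
    (∑ i : Fin 4, ∫ x in T.face i, ∑ c, (w x c - Pw x c) * starRingEnd ℂ (μ x c) ∂μH[2]) = 0

def IsPMProjFR (T : Tet) (k : ℕ) (w Pw : E3 → V3R) : Prop :=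
  FacewisePolyR T k Pw ∧ ∀ μ : E3 → V3R, FacewisePolyR T k μ →
    (∑ i : Fin 4, ∫ x in T.face i, ∑ c, (w x c - Pw x c) * μ x c ∂μH[2]) = 0

/-- The complex-linear extension of a real linear operator on `3×3` matrices. -/
def cext (L : MatR →ₗ[ℝ] MatR) (ξ : MatC) : MatC :=
  Matrix.of fun a b =>
    (((L (Matrix.of fun i j => (ξ i j).re)) a b : ℝ) : ℂ) +
    (((L (Matrix.of fun i j => (ξ i j).im)) a b : ℝ) : ℂ) * Complex.I

/-- `‖σ‖²_{A,K} = ∫_K (Aσ) : σ̄`. -/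
def aNormSqK (A : E3 → MatR →ₗ[ℝ] MatR) (S : Set E3) (σ : E3 → MatC) : ℝ :=
  (∫ x in S, frobC (cext (A x) (σ x)) (mapConj (σ x))).re

/-- `‖u‖²_{ρ,K} = ∫_K ρ u·ū`. -/
def rhoNormSqK (ρ : E3 → ℝ) (S : Set E3) (u : E3 → V3) : ℝ :=
  ∫ x in S, ρ x * ∑ c, ‖u x c‖ ^ 2


-- ===== auxiliary lemmas =====
open scoped ENNReal NNReal

-- conj of evalP
lemma evalP_conj (p : MvPolynomial (Fin 3) ℂ) (x : E3) :
    evalP (MvPolynomial.map (starRingEnd ℂ) p) x = starRingEnd ℂ (evalP p x) := by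
  unfold evalP
  rw [MvPolynomial.eval_map]
  calc MvPolynomial.eval₂ (starRingEnd ℂ) (fun j => ((x j : ℝ) : ℂ)) p
      = MvPolynomial.eval₂ ((starRingEnd ℂ).comp (RingHom.id ℂ))
          ((starRingEnd ℂ) ∘ fun j => ((x j : ℝ) : ℂ)) p := by
        congr 1
        funext j; simp
    _ = starRingEnd ℂ (MvPolynomial.eval₂ (RingHom.id ℂ) (fun j => ((x j : ℝ) : ℂ)) p) :=
        (MvPolynomial.eval₂_comp_left _ _ _ _).symm
    _ = starRingEnd ℂ (MvPolynomial.eval (fun j => ((x j : ℝ) : ℂ)) p) := rfl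

lemma totalDegree_map_le (p : MvPolynomial (Fin 3) ℂ) :
    (MvPolynomial.map (starRingEnd ℂ) p).totalDegree ≤ p.totalDegree :=
  Finset.sup_mono (MvPolynomial.support_map_subset _ _)

-- differentiability of evalP
lemma differentiable_evalP (p : MvPolynomial (Fin 3) ℂ) :
    Differentiable ℝ (fun x : E3 => evalP p x) := by
  unfold evalP
  induction p using MvPolynomial.induction_on with
  | C a => simpa using differentiable_const _
  | add p q hp hq => simp only [map_add]; exact hp.add hq
  | mul_X p j hp =>
      simp only [map_mul, MvPolynomial.eval_X]
      exact hp.mul ((Complex.ofRealCLM.differentiable).comp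
        (EuclideanSpace.proj (𝕜 := ℝ) j).differentiable)

lemma continuous_evalP (p : MvPolynomial (Fin 3) ℂ) : Continuous (fun x : E3 => evalP p x) :=
  (differentiable_evalP p).continuous

lemma pderiv'_conj (f : E3 → ℂ) (x : E3) (j : Fin 3) :
    pderiv' (fun y => starRingEnd ℂ (f y)) x j = starRingEnd ℂ (pderiv' f x j) := by
  unfold pderiv'
  have : (fun y => starRingEnd ℂ (f y)) = (Complex.conjCLE : ℂ ≃L[ℝ] ℂ) ∘ f := rfl
  rw [this, ContinuousLinearEquiv.comp_fderiv]
  rfl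

lemma frobR_comm (M N : MatR) : frobR M N = frobR N M := by
  unfold frobR
  exact Finset.sum_congr rfl fun a _ => Finset.sum_congr rfl fun b _ => mul_comm _ _

lemma evalP_sum {γ : Type} (s : Finset γ) (p : γ → MvPolynomial (Fin 3) ℂ) (x : E3) :
    evalP (∑ i ∈ s, p i) x = ∑ i ∈ s, evalP (p i) x := by
  unfold evalP; exact map_sum _ _ _

lemma evalP_C_mul (c : ℂ) (p : MvPolynomial (Fin 3) ℂ) (x : E3) :
    evalP (MvPolynomial.C c * p) x = c * evalP p x := by
  unfold evalP; simp

lemma imFrob_zero (Lop : MatR →ₗ[ℝ] MatR) (s : MatC) (hs : sᵀ = s)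
    (hsym : ∀ ξ χ : MatR, ξᵀ = ξ → χᵀ = χ → frobR (Lop ξ) χ = frobR ξ (Lop χ)) :
    (frobC (cext Lop s) (mapConj s)).im = 0 := by
  set sre : MatR := Matrix.of fun i j => (s i j).re with hsre
  set sim : MatR := Matrix.of fun i j => (s i j).im with hsim
  have hent : ∀ a b, s b a = s a b := fun a b => congrFun (congrFun hs a) b
  have hsres : sreᵀ = sre := by
    ext a b; show (s b a).re = (s a b).re; rw [hent]
  have hsims : simᵀ = sim := by
    ext a b; show (s b a).im = (s a b).im; rw [hent]
  have key := hsym sim sre hsims hsres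
  have hterm : ∀ a b : Fin 3, ((cext Lop s) a b * (mapConj s) a b).im
      = (Lop sim) a b * sre a b - (Lop sre) a b * sim a b := by
    intro a b
    have h1 : (cext Lop s) a b = (((Lop sre) a b : ℝ) : ℂ) + (((Lop sim) a b : ℝ) : ℂ) * Complex.I := rfl
    have h2 : (mapConj s) a b = starRingEnd ℂ (s a b) := rfl
    rw [h1, h2]
    have h3 : sre a b = (s a b).re := rfl
    have h4 : sim a b = (s a b).im := rfl
    rw [h3, h4]
    simp [Complex.add_im, Complex.mul_im, Complex.add_re, Complex.mul_re]
    ring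
  have him : (frobC (cext Lop s) (mapConj s)).im
      = ∑ a, ∑ b, ((cext Lop s) a b * (mapConj s) a b).im := by
    rw [frobC, Complex.im_sum]
    exact Finset.sum_congr rfl fun a _ => Complex.im_sum _ _
  rw [him]
  calc ∑ a, ∑ b, ((cext Lop s) a b * (mapConj s) a b).im
      = ∑ a, ∑ b, ((Lop sim) a b * sre a b - (Lop sre) a b * sim a b) := by
        exact Finset.sum_congr rfl fun a _ => Finset.sum_congr rfl fun b _ => hterm a b
    _ = frobR (Lop sim) sre - frobR (Lop sre) sim := by
        rw [frobR, frobR, ← Finset.sum_sub_distrib]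
        exact Finset.sum_congr rfl fun a _ => Finset.sum_sub_distrib _ _
    _ = 0 := by rw [key, frobR_comm]; ring

namespace Tet
variable (T : Tet)

lemma isCompact_K : IsCompact T.K :=
  (Set.finite_range T.v).isCompact_convexHull ℝ

lemma isClosed_K : IsClosed T.K := T.isCompact_K.isClosed

lemma isCompact_face (i : Fin 4) : IsCompact (T.face i) :=
  ((Set.finite_range T.v).subset (Set.image_subset_range _ _)).isCompact_convexHull ℝ

lemma isClosed_face (i : Fin 4) : IsClosed (T.face i) := (T.isCompact_face i).isClosed

/-- The affine basis given by the four vertices. -/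
def basis : AffineBasis (Fin 4) ℝ E3 :=
  ⟨T.v, T.indep, by
    rw [T.indep.affineSpan_eq_top_iff_card_eq_finrank_add_one]
    simp [finrank_euclideanSpace]⟩

lemma basis_coe : ⇑T.basis = T.v := rfl

lemma coord_eq_zero_on_face (i : Fin 4) {x : E3} (hx : x ∈ T.face i) :
    T.basis.coord i x = 0 := by
  have h1 : ⇑(T.basis.coord i) '' T.face i ⊆ {(0:ℝ)} := by
    rw [Tet.face, AffineMap.image_convexHull]
    refine convexHull_min ?_ (convex_singleton 0)
    rintro y ⟨z, ⟨j, hj, rfl⟩, rfl⟩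
    simp only [Set.mem_singleton_iff]
    rw [← T.basis_coe]
    exact T.basis.coord_apply_ne (Ne.symm hj)
  exact h1 ⟨x, hx, rfl⟩

lemma face_subset_K (i : Fin 4) : T.face i ⊆ T.K :=
  convexHull_mono (Set.image_subset_range _ _)

lemma face_subset_frontier (i : Fin 4) : T.face i ⊆ frontier T.K := by
  intro x hx
  rw [T.isClosed_K.frontier_eq]
  refine ⟨T.face_subset_K i hx, ?_⟩
  intro hint
  rw [Tet.K, ← T.basis_coe, T.basis.interior_convexHull] at hint
  exact absurd (T.coord_eq_zero_on_face i hx) (ne_of_gt (hint i))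

lemma mem_face_of_coord_zero {x : E3} (hx : x ∈ T.K) {i : Fin 4}
    (hzero : T.basis.coord i x = 0) : x ∈ T.face i := by
  have hnn : ∀ j, 0 ≤ T.basis.coord j x := by
    have := T.basis.convexHull_eq_nonneg_coord
    rw [Tet.K, ← T.basis_coe] at hx
    rw [this] at hx
    exact hx
  have hsum : ∑ j, T.basis.coord j x = 1 := T.basis.sum_coord_apply_eq_one x
  have hrepr : (Finset.univ.affineCombination ℝ T.v fun j => T.basis.coord j x) = x := by
    rw [← T.basis_coe]; exact T.basis.affineCombination_coord_eq_self x
  have h2 := Finset.univ.affineCombination_eq_linear_combination T.v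
    (fun j => T.basis.coord j x) hsum
  have hlin : x = ∑ j, T.basis.coord j x • T.v j := hrepr.symm.trans h2
  have key : ∀ (w : Fin 4 → ℝ), w i = 0 →
      ∑ j, w j • T.v j = ∑ j ∈ Finset.univ.erase i, w j • T.v j := by
    intro w hw
    rw [← Finset.sum_erase_add _ _ (Finset.mem_univ i), hw, zero_smul, add_zero]
  rw [hlin, key _ hzero]
  refine (convex_convexHull ℝ _).sum_mem (fun j _ => hnn j) ?_ ?_
  · rw [Finset.sum_erase_eq_sub (Finset.mem_univ i), hsum, hzero, sub_zero]
  · intro j hj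
    exact subset_convexHull ℝ _ ⟨j, Finset.ne_of_mem_erase hj, rfl⟩

lemma frontier_subset_faces : frontier T.K ⊆ ⋃ i, T.face i := by
  intro x hx
  rw [T.isClosed_K.frontier_eq] at hx
  obtain ⟨hxK, hxint⟩ := hx
  have : ¬ ∀ i, 0 < T.basis.coord i x := by
    intro h
    apply hxint
    rw [Tet.K, ← T.basis_coe, T.basis.interior_convexHull]
    exact h
  push_neg at this
  obtain ⟨i, hi⟩ := this
  have hnn : 0 ≤ T.basis.coord i x := by
    have := T.basis.convexHull_eq_nonneg_coord
    rw [Tet.K, ← T.basis_coe, this] at hxK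
    exact hxK i
  exact Set.mem_iUnion.2 ⟨i, T.mem_face_of_coord_zero hxK (le_antisymm hi hnn)⟩

lemma hK_pos : 0 < T.hK := by
  have h01 : T.v 0 ≠ T.v 1 := fun h => by
    have := T.indep.injective h; simp at this
  have hb : Bornology.IsBounded T.K := T.isCompact_K.isBounded
  have h0 : T.v 0 ∈ T.K := subset_convexHull ℝ _ ⟨0, rfl⟩
  have h1 : T.v 1 ∈ T.K := subset_convexHull ℝ _ ⟨1, rfl⟩
  calc (0:ℝ) < dist (T.v 0) (T.v 1) := dist_pos.2 h01
    _ ≤ T.hK := Metric.dist_le_diam_of_mem hb h0 h1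

lemma face_eq (i : Fin 4) : T.face i = convexHull ℝ (Set.range (T.v ∘ i.succAbove)) := by
  rw [Tet.face, Set.range_comp, Fin.range_succAbove]
  rfl

lemma indep_face (i : Fin 4) : AffineIndependent ℝ (T.v ∘ i.succAbove) :=
  T.indep.comp_embedding ⟨i.succAbove, Fin.succAbove_right_injective⟩

end Tet

namespace TriAux

variable (w : Fin 3 → E3)

/-- The linear map `(y₀, y₁) ↦ y₀ • (w 1 - w 0) + y₁ • (w 2 - w 0)`. -/
def L : (Fin 2 → ℝ) →ₗ[ℝ] E3 :=
  (LinearMap.proj (R := ℝ) (φ := fun _ : Fin 2 => ℝ) 0).smulRight (w 1 - w 0) +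
  (LinearMap.proj (R := ℝ) (φ := fun _ : Fin 2 => ℝ) 1).smulRight (w 2 - w 0)

lemma L_apply (y : Fin 2 → ℝ) : L w y = y 0 • (w 1 - w 0) + y 1 • (w 2 - w 0) := rfl

/-- The affine parametrization of the triangle. -/
def g : (Fin 2 → ℝ) →ᵃ[ℝ] E3 :=
  AffineMap.mk' (fun y => L w y + w 0) (L w) 0 (by
    intro p
    simp [vsub_eq_sub, vadd_eq_add])

lemma g_apply (y : Fin 2 → ℝ) : g w y = L w y + w 0 := rfl

def qpts : Fin 3 → (Fin 2 → ℝ) := ![0, Pi.single 0 1, Pi.single 1 1]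

lemma g_comp_q : (g w) ∘ (qpts) = w := by
  funext m
  fin_cases m <;>
    simp [g_apply, qpts, L_apply]

/-- The standard triangle. -/
def Δ : Set (Fin 2 → ℝ) := convexHull ℝ (Set.range qpts)

lemma tri_eq : convexHull ℝ (Set.range w) = (g w) '' (Δ) := by
  show _ = ⇑(g w) '' convexHull ℝ (Set.range qpts)
  rw [AffineMap.image_convexHull, ← Set.range_comp, g_comp_q]

lemma lipschitz_g : ∃ Kg : NNReal, LipschitzWith Kg (g w) := by
  have : LipschitzWith ‖(LinearMap.toContinuousLinearMap (L w))‖₊ (g w) := by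
    apply LipschitzWith.of_dist_le_mul
    intro y y'
    have h1 : g w y - g w y' = (LinearMap.toContinuousLinearMap (L w)) (y - y') := by
      simp [g_apply, map_sub]
    rw [dist_eq_norm, dist_eq_norm, h1]
    exact (LinearMap.toContinuousLinearMap (L w)).le_opNorm _
  exact ⟨_, this⟩

lemma mem_Δ (p : Fin 2 → ℝ) (h0 : 0 ≤ p 0) (h1 : 0 ≤ p 1) (hs : p 0 + p 1 ≤ 1) : p ∈ Δ := by
  show p ∈ convexHull ℝ (Set.range qpts)
  have h := (convex_convexHull ℝ (Set.range qpts)).sum_mem (t := (Finset.univ : Finset (Fin 3)))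
    (w := ![1 - p 0 - p 1, p 0, p 1]) (z := qpts)
    (by intro i _; fin_cases i <;> simp <;> linarith)
    (by simp [Fin.sum_univ_three]; ring)
    (fun i _ => subset_convexHull ℝ _ ⟨i, rfl⟩)
  have hp : ∑ i, ![1 - p 0 - p 1, p 0, p 1] i • qpts i = p := by
    funext j
    fin_cases j <;> simp [Fin.sum_univ_three, qpts, Pi.single_apply] <;> ring
  rwa [hp] at h

lemma interior_pt : (fun _ => (1:ℝ)/4) ∈ interior (Δ) := by
  rw [mem_interior]
  refine ⟨Metric.ball (fun _ => (1:ℝ)/4) (1/8), ?_, Metric.isOpen_ball, Metric.mem_ball_self (by norm_num)⟩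
  intro p hp
  rw [Metric.mem_ball] at hp
  have h0 : |p 0 - 1/4| < 1/8 := by
    have := lt_of_le_of_lt (dist_le_pi_dist p (fun _ => (1:ℝ)/4) 0) hp
    simpa [Real.dist_eq] using this
  have h1 : |p 1 - 1/4| < 1/8 := by
    have := lt_of_le_of_lt (dist_le_pi_dist p (fun _ => (1:ℝ)/4) 1) hp
    simpa [Real.dist_eq] using this
  rw [abs_lt] at h0 h1
  exact mem_Δ p (by linarith [h0.1]) (by linarith [h1.1]) (by linarith [h0.2, h1.2])

lemma vol_inter_ball_pos (y₀ : Fin 2 → ℝ) (hy₀ : y₀ ∈ Δ) {δ : ℝ} (hδ : 0 < δ) :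
    0 < volume (Δ ∩ Metric.ball y₀ δ) := by
  set c : Fin 2 → ℝ := fun _ => (1:ℝ)/4
  have hc : c ∈ interior Δ := interior_pt
  set d : ℝ := dist c y₀ with hd
  have hdnn : 0 ≤ d := dist_nonneg
  set s : ℝ := min 1 (δ / (2 * d + 1)) with hs
  have hspos : 0 < s := lt_min one_pos (div_pos hδ (by linarith))
  have hs1 : s ≤ 1 := min_le_left _ _
  set z : Fin 2 → ℝ := y₀ + s • (c - y₀) with hz
  have hzint : z ∈ interior Δ :=
    (convex_convexHull ℝ _).add_smul_sub_mem_interior hy₀ hc ⟨hspos, hs1⟩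
  have hdist : dist z y₀ < δ := by
    rw [hz, dist_eq_norm]
    have : y₀ + s • (c - y₀) - y₀ = s • (c - y₀) := by abel
    rw [this, norm_smul, Real.norm_eq_abs, abs_of_pos hspos]
    have h1 : ‖c - y₀‖ = d := by rw [hd, dist_eq_norm]
    rw [h1]
    calc s * d ≤ (δ / (2 * d + 1)) * d := by
          apply mul_le_mul_of_nonneg_right (min_le_right _ _) hdnn
      _ < δ := by
          rw [div_mul_eq_mul_div, div_lt_iff₀ (by linarith)]
          nlinarith
  obtain ⟨η, hη, hball⟩ := Metric.isOpen_iff.1 isOpen_interior z hzint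
  set η' : ℝ := min η (δ - dist z y₀) with hη'
  have hη'pos : 0 < η' := lt_min hη (by linarith)
  have hsub : Metric.ball z η' ⊆ Δ ∩ Metric.ball y₀ δ := by
    intro p hp
    constructor
    · exact interior_subset (hball (Metric.ball_subset_ball (min_le_left _ _) hp))
    · rw [Metric.mem_ball] at hp ⊢
      calc dist p y₀ ≤ dist p z + dist z y₀ := dist_triangle _ _ _
        _ < η' + dist z y₀ := by linarith
        _ ≤ (δ - dist z y₀) + dist z y₀ := by
            have := min_le_right η (δ - dist z y₀); linarith
        _ = δ := by ring
  calc (0:ℝ≥0∞) < volume (Metric.ball z η') := Metric.measure_ball_pos _ _ hη'pos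
    _ ≤ volume (Δ ∩ Metric.ball y₀ δ) := measure_mono hsub

end TriAux

open TriAux in
/-- Key measure facts for a (nondegenerate for positivity) triangle in `ℝ³`. -/
lemma tri_measure (w : Fin 3 → E3) (hw : AffineIndependent ℝ w) :
    μH[2] (convexHull ℝ (Set.range w)) < ⊤ ∧
    ∀ x₀ ∈ convexHull ℝ (Set.range w), ∀ r : ℝ, 0 < r →
      0 < μH[2] (convexHull ℝ (Set.range w) ∩ Metric.ball x₀ r) := by
  obtain ⟨Kg, hKg⟩ := lipschitz_g w
  have hμΔ : (μH[2] : Measure (Fin 2 → ℝ)) = volume := by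
    have := hausdorffMeasure_pi_real (ι := Fin 2)
    simpa using this
  -- left inverse
  have hker : LinearMap.ker (L w) = ⊥ := by
    rw [LinearMap.ker_eq_bot']
    intro y hy
    rw [L_apply] at hy
    have li0 := (affineIndependent_iff_linearIndependent_vsub ℝ w 0).1 hw
    have li : LinearIndependent ℝ (fun j : Fin 2 => w (Fin.succ j) - w 0) := by
      have hinj : Function.Injective
          (fun j : Fin 2 => (⟨Fin.succ j, Fin.succ_ne_zero j⟩ : {x : Fin 3 // x ≠ 0})) := by
        intro a b hab
        have h := congrArg Subtype.val hab
        simp only at h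
        exact Fin.succ_injective _ h
      have := li0.comp _ hinj
      exact this
    have := Fintype.linearIndependent_iff.1 li y (by
      simpa [Fin.sum_univ_two] using hy)
    funext j
    exact this j
  obtain ⟨B, hB⟩ := (L w).exists_leftInverse_of_injective hker
  set Bc := LinearMap.toContinuousLinearMap B with hBc
  have hhg : ∀ y, B (g w y - w 0) = y := by
    intro y
    rw [g_apply]
    have : L w y + w 0 - w 0 = L w y := by abel
    rw [this]
    exact congrFun (congrArg (fun f => f.toFun) hB) y
  have hlip_h : LipschitzWith ‖Bc‖₊ (fun z : E3 => B (z - w 0)) := by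
    apply LipschitzWith.of_dist_le_mul
    intro z z'
    have h1 : B (z - w 0) - B (z' - w 0) = Bc (z - z') := by
      rw [hBc]; simp [← map_sub]
    rw [dist_eq_norm, dist_eq_norm, h1]
    exact Bc.le_opNorm _
  constructor
  · rw [tri_eq]
    calc μH[2] (g w '' Δ) ≤ (Kg : ℝ≥0∞) ^ (2:ℝ) * μH[2] (Δ) :=
          hKg.hausdorffMeasure_image_le (by norm_num) _
      _ < ⊤ := by
          apply ENNReal.mul_lt_top
          · exact (ENNReal.rpow_lt_top_of_nonneg (by norm_num) ENNReal.coe_ne_top)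
          · rw [hμΔ]
            exact ((Set.finite_range qpts).isCompact_convexHull ℝ).measure_lt_top
  · intro x₀ hx₀ r hr
    rw [tri_eq] at hx₀ ⊢
    obtain ⟨y₀, hy₀, rfl⟩ := hx₀
    set δ : ℝ := r / (Kg + 1) with hδdef
    have hδ : 0 < δ := div_pos hr (by positivity)
    set S : Set (Fin 2 → ℝ) := Δ ∩ Metric.ball y₀ δ with hS
    have hvolS : 0 < volume S := vol_inter_ball_pos y₀ hy₀ hδ
    have himg : g w '' S ⊆ (g w '' Δ) ∩ Metric.ball (g w y₀) r := by
      rintro z ⟨y, ⟨hyΔ, hyb⟩, rfl⟩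
      refine ⟨⟨y, hyΔ, rfl⟩, ?_⟩
      rw [Metric.mem_ball] at hyb ⊢
      calc dist (g w y) (g w y₀) ≤ Kg * dist y y₀ := hKg.dist_le_mul _ _
        _ ≤ Kg * δ := by
            apply mul_le_mul_of_nonneg_left hyb.le (NNReal.coe_nonneg Kg)
        _ < r := by
            rw [hδdef, ← mul_div_assoc, div_lt_iff₀ (by positivity)]
            nlinarith [NNReal.coe_nonneg Kg, hr]
    have hS_eq : (fun z : E3 => B (z - w 0)) '' (g w '' S) = S := by
      rw [Set.image_image]
      simpa [hhg] using Set.image_id S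
    have h2 : μH[2] S ≤ (‖Bc‖₊ : ℝ≥0∞) ^ (2:ℝ) * μH[2] (g w '' S) := by
      conv_lhs => rw [← hS_eq]
      exact hlip_h.hausdorffMeasure_image_le (by norm_num) _
    have hpos : 0 < μH[2] (g w '' S) := by
      rcases eq_or_lt_of_le (zero_le : 0 ≤ μH[2] (g w '' S)) with h0 | h0
      · exfalso
        rw [← h0, mul_zero] at h2
        rw [hμΔ] at h2
        exact absurd (le_antisymm h2 zero_le) (ne_of_gt hvolS)
      · exact h0
    exact lt_of_lt_of_le hpos (measure_mono himg)

section AuxMeasure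
open scoped ENNReal NNReal

namespace Tet
variable (T : Tet)

lemma measure_face_lt_top (i : Fin 4) : μH[2] (T.face i) < ⊤ := by
  rw [T.face_eq]
  exact (tri_measure _ (T.indep_face i)).1

lemma measure_face_ball_pos (i : Fin 4) {x₀ : E3} (hx₀ : x₀ ∈ T.face i) {r : ℝ} (hr : 0 < r) :
    0 < μH[2] (T.face i ∩ Metric.ball x₀ r) := by
  rw [T.face_eq] at hx₀ ⊢
  exact (tri_measure _ (T.indep_face i)).2 x₀ hx₀ r hr

lemma measure_frontier_lt_top : μH[2] (frontier T.K) < ⊤ := by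
  calc μH[2] (frontier T.K) ≤ μH[2] (⋃ i, T.face i) := measure_mono T.frontier_subset_faces
    _ ≤ ∑ i, μH[2] (T.face i) := measure_iUnion_fintype_le _ _
    _ < ⊤ := ENNReal.sum_lt_top.2 fun i _ => T.measure_face_lt_top i

lemma isCompact_frontier : IsCompact (frontier T.K) :=
  T.isCompact_K.of_isClosed_subset isClosed_frontier T.isClosed_K.frontier_subset

/-- Integrability over the boundary of a function which agrees with continuous functions on
each face. -/
lemma integrableOn_frontier {E : Type} [NormedAddCommGroup E] [NormedSpace ℝ E]
    [MeasurableSpace E] [BorelSpace E] [SecondCountableTopology E]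
    (f : E3 → E) (g : Fin 4 → E3 → E) (hg : ∀ i, Continuous (g i))
    (hfg : ∀ i, ∀ x ∈ T.face i, f x = g i x) :
    IntegrableOn f (frontier T.K) μH[2] := by
  set G : E3 → E := fun x =>
    if x ∈ T.face 0 then g 0 x else if x ∈ T.face 1 then g 1 x
    else if x ∈ T.face 2 then g 2 x else g 3 x with hG
  have hGmeas : Measurable G := by
    refine Measurable.ite (T.isClosed_face 0).measurableSet (hg 0).measurable ?_
    refine Measurable.ite (T.isClosed_face 1).measurableSet (hg 1).measurable ?_
    exact Measurable.ite (T.isClosed_face 2).measurableSet (hg 2).measurable (hg 3).measurable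
  have hEq : Set.EqOn f G (frontier T.K) := by
    intro x hx
    obtain ⟨_, ⟨i, rfl⟩, hxi⟩ := T.frontier_subset_faces hx
    rw [hG]
    simp only
    by_cases h0 : x ∈ T.face 0
    · rw [if_pos h0]; exact hfg 0 x h0
    rw [if_neg h0]
    by_cases h1 : x ∈ T.face 1
    · rw [if_pos h1]; exact hfg 1 x h1
    rw [if_neg h1]
    by_cases h2 : x ∈ T.face 2
    · rw [if_pos h2]; exact hfg 2 x h2
    rw [if_neg h2]
    have h3 : x ∈ T.face 3 := by
      fin_cases i
      · exact absurd hxi h0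
      · exact absurd hxi h1
      · exact absurd hxi h2
      · exact hxi
    exact hfg 3 x h3
  have hbound : ∀ i : Fin 4, ∃ C : ℝ, ∀ x ∈ frontier T.K, ‖g i x‖ ≤ C := fun i =>
    T.isCompact_frontier.exists_bound_of_continuousOn (hg i).continuousOn
  obtain ⟨C0, h0⟩ := hbound 0
  obtain ⟨C1, h1⟩ := hbound 1
  obtain ⟨C2, h2⟩ := hbound 2
  obtain ⟨C3, h3⟩ := hbound 3
  have hGbound : ∀ x ∈ frontier T.K, ‖G x‖ ≤ max (max C0 C1) (max C2 C3) := by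
    intro x hx
    rw [hG]
    simp only
    split_ifs
    · exact le_trans (h0 x hx) (le_max_of_le_left (le_max_left _ _))
    · exact le_trans (h1 x hx) (le_max_of_le_left (le_max_right _ _))
    · exact le_trans (h2 x hx) (le_max_of_le_right (le_max_left _ _))
    · exact le_trans (h3 x hx) (le_max_of_le_right (le_max_right _ _))
  have hfront : MeasurableSet (frontier T.K) := isClosed_frontier.measurableSet
  have hGint : IntegrableOn G (frontier T.K) μH[2] := by
    refine Measure.integrableOn_of_bounded (M := max (max C0 C1) (max C2 C3))
      (ne_of_lt T.measure_frontier_lt_top) hGmeas.aestronglyMeasurable ?_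
    exact (ae_restrict_iff' hfront).2 (Filter.Eventually.of_forall hGbound)
  exact hGint.congr (Filter.eventually_of_mem (self_mem_ae_restrict hfront)
    (fun x hx => (hEq hx).symm))

lemma eq_zero_of_ae_zero_on_face (i : Fin 4) {φ : E3 → ℝ} (hφ : Continuous φ)
    (hnn : ∀ x, 0 ≤ φ x) (hae : ∀ᵐ x ∂(μH[2].restrict (T.face i)), φ x = 0) :
    ∀ x ∈ T.face i, φ x = 0 := by
  intro x₀ hx₀
  by_contra hne
  have hpos : 0 < φ x₀ := lt_of_le_of_ne (hnn x₀) (Ne.symm hne)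
  obtain ⟨r, hr, hball⟩ := Metric.isOpen_iff.1 (isOpen_lt continuous_const hφ) x₀ hpos
  have hzero : (μH[2].restrict (T.face i)) {x | φ x ≠ 0} = 0 := by
    rw [← MeasureTheory.ae_iff]
    exact hae
  have hsub : T.face i ∩ Metric.ball x₀ r ⊆ {x | φ x ≠ 0} ∩ T.face i := by
    rintro y ⟨hyf, hyb⟩
    exact ⟨ne_of_gt (hball hyb), hyf⟩
  have hfacemeas : MeasurableSet (T.face i) := (T.isClosed_face i).measurableSet
  have : μH[2] (T.face i ∩ Metric.ball x₀ r) = 0 := by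
    refine le_antisymm ?_ zero_le
    calc μH[2] (T.face i ∩ Metric.ball x₀ r) ≤ μH[2] ({x | φ x ≠ 0} ∩ T.face i) :=
          measure_mono hsub
      _ = (μH[2].restrict (T.face i)) {x | φ x ≠ 0} := (Measure.restrict_apply' hfacemeas).symm
      _ = 0 := hzero
  exact absurd this (ne_of_gt (T.measure_face_ball_pos i hx₀ hr))

end Tet
end AuxMeasure


/-- local energy identity.  If `(σ, u) ∈ P_k(K;ℂ^{3×3}_sym) × P_{k+1}(K;ℂ³)`
solves the homogeneous local HDG equations, then
`iκ(‖σ‖²_{A,K} − ‖u‖²_{ρ,K}) + ⟨τ_K P_M ū, P_M u⟩_{∂K} = 0`; consequently `P_M u = 0` on `∂K`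
and `‖σ‖_{A,K} = ‖u‖_{ρ,K}`. -/
theorem statement5 (T : Tet) (k : ℕ) (κ : ℝ) (hκ : 0 < κ)
    (A : E3 → MatR →ₗ[ℝ] MatR) (c₀ : ℝ) (hc₀ : 0 < c₀) (cA : E3 → ℝ)
    (hA : ∀ᵐ x ∂(volume.restrict T.K),
      (∀ ξ : MatR, ξᵀ = ξ → (A x ξ)ᵀ = A x ξ) ∧
      (∀ ξ χ : MatR, ξᵀ = ξ → χᵀ = χ → frobR (A x ξ) χ = frobR ξ (A x χ)) ∧
      (∀ ξ : MatR, ξᵀ = ξ →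
        c₀ * frobR ξ ξ ≤ frobR (A x ξ) ξ ∧ frobR (A x ξ) ξ ≤ cA x * frobR ξ ξ))
    (ρ : E3 → ℝ) (ρ₀ : ℝ) (hρ₀ : 0 < ρ₀)
    (hρ : ∀ᵐ x ∂(volume.restrict T.K), ρ₀ ≤ ρ x)
    (τ : E3 → MatR)
    (hτface : ∀ i : Fin 4, ∃ M : MatR, Mᵀ = M ∧ ∀ x ∈ T.face i, τ x = M)
    (Cτ₁ Cτ₂ : ℝ) (hCτ₁ : 0 < Cτ₁) (hCτ₂ : 0 < Cτ₂)
    (hτ : ∀ μ : E3 → V3,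
      Cτ₁ * T.hK⁻¹ * (∫ x in frontier T.K, ∑ c, ‖μ x c‖ ^ 2 ∂μH[2]) ≤
        (∫ x in frontier T.K,
          ∑ a, (∑ b, ((τ x a b : ℝ) : ℂ) * μ x b) * starRingEnd ℂ (μ x a) ∂μH[2]).re ∧
      (∫ x in frontier T.K,
          ∑ a, (∑ b, ((τ x a b : ℝ) : ℂ) * μ x b) * starRingEnd ℂ (μ x a) ∂μH[2]).re ≤
        Cτ₂ * T.hK⁻¹ * (∫ x in frontier T.K, ∑ c, ‖μ x c‖ ^ 2 ∂μH[2]))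
    (σ : E3 → MatC) (u : E3 → V3)
    (hσ : IsPolyMatSym k σ) (hu : IsPolyVec (k+1) u)
    (Pu : E3 → V3) (hPu : IsPMProj T k u Pu)
    -- (LOC-a): `iκ(Aσ, ξ)_K − (u, ∇·ξ)_K = 0` for all `ξ ∈ P_k(K; ℂ^{3×3}_sym)`
    (heq1 : ∀ ξ : E3 → MatC, IsPolyMatSym k ξ →
      Complex.I * (κ : ℂ) * (∫ x in T.K, frobC (cext (A x) (σ x)) (ξ x)) -
        (∫ x in T.K, ∑ c, u x c * divM ξ x c) = 0)
    -- (LOC-b): `(∇·σ, w)_K + ⟨τ_K P_M u, w⟩_{∂K} + iκ(ρu, w)_K = 0` for all `w ∈ P_{k+1}(K; ℂ³)`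
    (heq2 : ∀ w : E3 → V3, IsPolyVec (k+1) w →
      (∫ x in T.K, ∑ c, divM σ x c * w x c) +
        (∫ x in frontier T.K,
          ∑ a, (∑ b, ((τ x a b : ℝ) : ℂ) * Pu x b) * w x a ∂μH[2]) +
        Complex.I * (κ : ℂ) * (∫ x in T.K, ∑ c, ((ρ x : ℝ) : ℂ) * u x c * w x c) = 0) :
    Complex.I * (κ : ℂ) * ((aNormSqK A T.K σ : ℂ) - (rhoNormSqK ρ T.K u : ℂ)) +
        (∫ x in frontier T.K,
          ∑ a, (∑ b, ((τ x a b : ℝ) : ℂ) * starRingEnd ℂ (Pu x b)) * Pu x a ∂μH[2]) = 0 ∧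
      (∀ x ∈ frontier T.K, Pu x = 0) ∧
      Real.sqrt (aNormSqK A T.K σ) = Real.sqrt (rhoNormSqK ρ T.K u) := by
  classical
  obtain ⟨hσsym, pσ, hpσdeg, hpσval⟩ := hσ
  obtain ⟨pu, hpudeg, hpuval⟩ := hu
  obtain ⟨hPuFP, hPuOrth⟩ := hPu
  choose Mi hMisym hMival using hτface
  choose pP hpPdeg hpPval using hPuFP
  have hent : ∀ x a b, σ x b a = σ x a b := fun x a b => congrFun (congrFun (hσsym x) a) b
  have hfront : MeasurableSet (frontier T.K) := isClosed_frontier.measurableSet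
  -- abbreviations
  set Ia : ℂ := ∫ x in T.K, frobC (cext (A x) (σ x)) (mapConj (σ x)) with hIadef
  set D : ℂ := ∫ x in T.K, ∑ c, u x c * divM (fun y => mapConj (σ y)) x c with hDdef
  set B : ℂ := ∫ x in frontier T.K,
    ∑ a, (∑ b, ((τ x a b : ℝ) : ℂ) * starRingEnd ℂ (Pu x b)) * Pu x a ∂μH[2] with hBdef
  set O : ℂ := ∫ x in frontier T.K,
    ∑ a, (∑ b, ((τ x a b : ℝ) : ℂ) * starRingEnd ℂ (Pu x b)) * (u x a - Pu x a) ∂μH[2] with hOdef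
  -- (1) LOC-a with ξ := conj σ
  have hξ : IsPolyMatSym k (fun x => mapConj (σ x)) := by
    refine ⟨fun x => ?_, fun a b => MvPolynomial.map (starRingEnd ℂ) (pσ a b),
      fun a b => (totalDegree_map_le _).trans (hpσdeg a b), fun x a b => ?_⟩
    · ext a b
      show starRingEnd ℂ (σ x b a) = starRingEnd ℂ (σ x a b)
      rw [hent]
    · show starRingEnd ℂ (σ x a b) = _
      rw [evalP_conj, hpσval]
  have E1 : Complex.I * (κ : ℂ) * Ia - D = 0 := heq1 _ hξ
  -- (2) LOC-b with w := conj u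
  have hwpoly : IsPolyVec (k+1) (fun x c => starRingEnd ℂ (u x c)) := by
    refine ⟨fun c => MvPolynomial.map (starRingEnd ℂ) (pu c),
      fun c => (totalDegree_map_le _).trans (hpudeg c), fun x c => ?_⟩
    show starRingEnd ℂ (u x c) = _
    rw [evalP_conj, hpuval]
  have E2 : (∫ x in T.K, ∑ c, divM σ x c * starRingEnd ℂ (u x c)) +
      (∫ x in frontier T.K,
        ∑ a, (∑ b, ((τ x a b : ℝ) : ℂ) * Pu x b) * starRingEnd ℂ (u x a) ∂μH[2]) +
      Complex.I * (κ : ℂ) * (∫ x in T.K, ∑ c, ((ρ x : ℝ) : ℂ) * u x c * starRingEnd ℂ (u x c))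
      = 0 := heq2 _ hwpoly
  -- (3) conjugate E2
  have E2c := congrArg (starRingEnd ℂ) E2
  rw [map_zero] at E2c
  rw [map_add] at E2c
  rw [map_add] at E2c
  rw [map_mul] at E2c
  rw [map_mul] at E2c
  rw [Complex.conj_I] at E2c
  rw [Complex.conj_ofReal] at E2c
  rw [← integral_conj] at E2c
  rw [← integral_conj] at E2c
  rw [← integral_conj] at E2c
  have hA2 : (∫ x in T.K, starRingEnd ℂ (∑ c, divM σ x c * starRingEnd ℂ (u x c))) = D := by
    rw [hDdef]
    refine integral_congr_ae (Filter.Eventually.of_forall fun x => ?_)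
    have hdiv : ∀ c, divM (fun y => mapConj (σ y)) x c = starRingEnd ℂ (divM σ x c) := by
      intro c
      simp only [divM, map_sum]
      exact Finset.sum_congr rfl fun j _ => pderiv'_conj (fun y => σ y c j) x j
    simp only [map_sum, map_mul, Complex.conj_conj]
    refine Finset.sum_congr rfl fun c _ => ?_
    rw [hdiv c]
    ring
  have hB2 : (∫ x in frontier T.K,
        starRingEnd ℂ (∑ a, (∑ b, ((τ x a b : ℝ) : ℂ) * Pu x b) * starRingEnd ℂ (u x a)) ∂μH[2])
      = ∫ x in frontier T.K,
        ∑ a, (∑ b, ((τ x a b : ℝ) : ℂ) * starRingEnd ℂ (Pu x b)) * u x a ∂μH[2] := by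
    refine integral_congr_ae (Filter.Eventually.of_forall fun x => ?_)
    simp only [map_sum, map_mul, Complex.conj_conj, Complex.conj_ofReal]
  have hR2 : (∫ x in T.K, starRingEnd ℂ (∑ c, ((ρ x : ℝ) : ℂ) * u x c * starRingEnd ℂ (u x c)))
      = ((rhoNormSqK ρ T.K u : ℝ) : ℂ) := by
    have hpt : ∀ x : E3, starRingEnd ℂ (∑ c, ((ρ x : ℝ) : ℂ) * u x c * starRingEnd ℂ (u x c))
        = ((ρ x * ∑ c, ‖u x c‖ ^ 2 : ℝ) : ℂ) := by
      intro x
      have hin : (∑ c, ((ρ x : ℝ) : ℂ) * u x c * starRingEnd ℂ (u x c))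
          = ((ρ x * ∑ c, ‖u x c‖ ^ 2 : ℝ) : ℂ) := by
        rw [Complex.ofReal_mul, Complex.ofReal_sum, Finset.mul_sum]
        refine Finset.sum_congr rfl fun c _ => ?_
        rw [mul_assoc, Complex.mul_conj]
        congr 1
        exact congrArg Complex.ofReal (by
          rw [Complex.normSq_eq_norm_sq])
      rw [hin, Complex.conj_ofReal]
    calc (∫ x in T.K, starRingEnd ℂ (∑ c, ((ρ x : ℝ) : ℂ) * u x c * starRingEnd ℂ (u x c)))
        = ∫ x in T.K, ((ρ x * ∑ c, ‖u x c‖ ^ 2 : ℝ) : ℂ) :=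
          integral_congr_ae (Filter.Eventually.of_forall fun x => hpt x)
      _ = ((rhoNormSqK ρ T.K u : ℝ) : ℂ) := integral_ofReal
  rw [hA2, hB2, hR2] at E2c
  -- (4) Ia is real
  have hIa : Ia = ((aNormSqK A T.K σ : ℝ) : ℂ) := by
    have hIm : ∀ᵐ x ∂(volume.restrict T.K),
        (frobC (cext (A x) (σ x)) (mapConj (σ x))).im = 0 := by
      filter_upwards [hA] with x hx
      exact imFrob_zero (A x) (σ x) (hσsym x) hx.2.1
    have him0 : Ia.im = 0 := by
      rw [hIadef]
      by_cases hint : Integrable (fun x => frobC (cext (A x) (σ x)) (mapConj (σ x)))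
        (volume.restrict T.K)
      · rw [show ((∫ x in T.K, frobC (cext (A x) (σ x)) (mapConj (σ x))).im)
            = RCLike.im (K := ℂ) (∫ x in T.K, frobC (cext (A x) (σ x)) (mapConj (σ x))) from rfl,
          ← integral_im hint]
        exact integral_eq_zero_of_ae hIm
      · rw [integral_undef hint]; simp
    have : aNormSqK A T.K σ = Ia.re := rfl
    rw [this, ← Complex.re_add_im Ia, him0]
    simp
  -- (5) split the boundary term using the projection property
  have hcontPP : ∀ i c, Continuous (fun x => evalP (pP i c) x) := fun i c => continuous_evalP _
  have hcontU : ∀ c, Continuous (fun x => evalP (pu c) x) := fun c => continuous_evalP _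
  have hOint : IntegrableOn
      (fun x => ∑ a, (∑ b, ((τ x a b : ℝ) : ℂ) * starRingEnd ℂ (Pu x b)) * (u x a - Pu x a))
      (frontier T.K) μH[2] := by
    refine T.integrableOn_frontier _
      (fun i x => ∑ a, (∑ b, ((Mi i a b : ℝ) : ℂ) * starRingEnd ℂ (evalP (pP i b) x)) *
        (evalP (pu a) x - evalP (pP i a) x)) (fun i => ?_) (fun i x hx => ?_)
    · refine continuous_finset_sum _ fun a _ => Continuous.mul ?_ ?_
      · exact continuous_finset_sum _ fun b _ => continuous_const.mul ((hcontPP i b).star)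
      · exact (hcontU a).sub (hcontPP i a)
    · beta_reduce
      refine Finset.sum_congr rfl fun a _ => ?_
      rw [hMival i x hx, hpuval x a, hpPval i x hx a]
      congr 1
      exact Finset.sum_congr rfl fun b _ => by rw [hpPval i x hx b]
  have hBint : IntegrableOn
      (fun x => ∑ a, (∑ b, ((τ x a b : ℝ) : ℂ) * starRingEnd ℂ (Pu x b)) * Pu x a)
      (frontier T.K) μH[2] := by
    refine T.integrableOn_frontier _
      (fun i x => ∑ a, (∑ b, ((Mi i a b : ℝ) : ℂ) * starRingEnd ℂ (evalP (pP i b) x)) *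
        evalP (pP i a) x) (fun i => ?_) (fun i x hx => ?_)
    · refine continuous_finset_sum _ fun a _ => Continuous.mul ?_ (hcontPP i a)
      exact continuous_finset_sum _ fun b _ => continuous_const.mul ((hcontPP i b).star)
    · beta_reduce
      refine Finset.sum_congr rfl fun a _ => ?_
      rw [hMival i x hx, hpPval i x hx a]
      congr 1
      exact Finset.sum_congr rfl fun b _ => by rw [hpPval i x hx b]
  have hsplit : (∫ x in frontier T.K,
      ∑ a, (∑ b, ((τ x a b : ℝ) : ℂ) * starRingEnd ℂ (Pu x b)) * u x a ∂μH[2]) = O + B := by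
    rw [hOdef, hBdef, ← integral_add hOint hBint]
    refine integral_congr_ae (Filter.Eventually.of_forall fun x => ?_)
    beta_reduce
    rw [← Finset.sum_add_distrib]
    refine Finset.sum_congr rfl fun a _ => ?_
    ring
  have hOzero : O = 0 := by
    have hμτ : FacewisePoly T k (fun x a => ∑ b, ((τ x a b : ℝ) : ℂ) * Pu x b) := by
      intro i
      refine ⟨fun a => ∑ b, MvPolynomial.C (((Mi i a b : ℝ) : ℂ)) * pP i b,
        fun a => ?_, fun x hx c => ?_⟩
      · refine le_trans (MvPolynomial.totalDegree_finset_sum _ _) (Finset.sup_le fun b _ => ?_)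
        refine le_trans (MvPolynomial.totalDegree_mul _ _) ?_
        rw [MvPolynomial.totalDegree_C, zero_add]
        exact hpPdeg i b
      · show (∑ b, ((τ x c b : ℝ) : ℂ) * Pu x b) = _
        rw [evalP_sum]
        refine Finset.sum_congr rfl fun b _ => ?_
        rw [evalP_C_mul, hMival i x hx, hpPval i x hx b]
    have horth := hPuOrth _ hμτ
    rw [hOdef, ← horth]
    refine integral_congr_ae (Filter.Eventually.of_forall fun x => ?_)
    simp only [map_sum, map_mul, Complex.conj_ofReal]
    refine Finset.sum_congr rfl fun a _ => ?_
    ring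
  rw [hsplit, hOzero, zero_add] at E2c
  have hD : D = Complex.I * (κ : ℂ) * Ia := by linear_combination -E1
  -- main identity
  have hgoal1 : Complex.I * (κ : ℂ) *
      (((aNormSqK A T.K σ : ℝ) : ℂ) - ((rhoNormSqK ρ T.K u : ℝ) : ℂ)) + B = 0 := by
    linear_combination E2c - Complex.I * (κ : ℂ) * hIa - hD
  -- real part of the identity
  have hBre : B.re = 0 := by
    have hre := congrArg Complex.re hgoal1
    simp only [Complex.add_re, Complex.mul_re, Complex.mul_im, Complex.I_re, Complex.I_im,
      Complex.ofReal_re, Complex.ofReal_im, Complex.sub_re, Complex.sub_im, Complex.zero_re] at hre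
    linarith
  -- coercivity gives `Pu = 0` a.e.
  have hBconj : (∫ x in frontier T.K,
      ∑ a, (∑ b, ((τ x a b : ℝ) : ℂ) * Pu x b) * starRingEnd ℂ (Pu x a) ∂μH[2])
      = starRingEnd ℂ B := by
    rw [hBdef, ← integral_conj]
    refine integral_congr_ae (Filter.Eventually.of_forall fun x => ?_)
    simp only [map_sum, map_mul, Complex.conj_conj, Complex.conj_ofReal]
  have hτ1 := (hτ Pu).1
  rw [hBconj] at hτ1
  have hJle : Cτ₁ * T.hK⁻¹ *
      (∫ x in frontier T.K, ∑ c, ‖Pu x c‖ ^ 2 ∂μH[2]) ≤ 0 := by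
    calc Cτ₁ * T.hK⁻¹ * (∫ x in frontier T.K, ∑ c, ‖Pu x c‖ ^ 2 ∂μH[2])
        ≤ (starRingEnd ℂ B).re := hτ1
      _ = B.re := Complex.conj_re B
      _ = 0 := hBre
  have hJnn : 0 ≤ (∫ x in frontier T.K, ∑ c, ‖Pu x c‖ ^ 2 ∂μH[2]) :=
    integral_nonneg fun x => Finset.sum_nonneg fun c _ => sq_nonneg _
  have hJ0 : (∫ x in frontier T.K, ∑ c, ‖Pu x c‖ ^ 2 ∂μH[2]) = 0 := by
    have hpos : 0 < Cτ₁ * T.hK⁻¹ := mul_pos hCτ₁ (inv_pos.2 T.hK_pos)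
    nlinarith
  have hJint : IntegrableOn (fun x => ∑ c, ‖Pu x c‖ ^ 2) (frontier T.K) μH[2] := by
    refine T.integrableOn_frontier _ (fun i x => ∑ c, ‖evalP (pP i c) x‖ ^ 2)
      (fun i => ?_) (fun i x hx => ?_)
    · exact continuous_finset_sum _ fun c _ => ((hcontPP i c).norm).pow 2
    · beta_reduce
      exact Finset.sum_congr rfl fun c _ => by rw [hpPval i x hx c]
  have haeJ : (fun x => ∑ c, ‖Pu x c‖ ^ 2) =ᶠ[ae (μH[2].restrict (frontier T.K))] 0 :=
    (setIntegral_eq_zero_iff_of_nonneg_ae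
      (Filter.Eventually.of_forall fun x => Finset.sum_nonneg fun c _ => sq_nonneg _) hJint).1 hJ0
  -- pointwise vanishing of `Pu` on the frontier
  have hPuzero : ∀ x ∈ frontier T.K, Pu x = 0 := by
    have hface : ∀ i : Fin 4, ∀ x ∈ T.face i, Pu x = 0 := by
      intro i
      have hφcont : Continuous (fun y => ∑ c, ‖evalP (pP i c) y‖ ^ 2) :=
        continuous_finset_sum _ fun c _ => ((hcontPP i c).norm).pow 2
      have hφnn : ∀ y, 0 ≤ ∑ c, ‖evalP (pP i c) y‖ ^ 2 :=
        fun y => Finset.sum_nonneg fun c _ => sq_nonneg _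
      have hfmeas : MeasurableSet (T.face i) := (T.isClosed_face i).measurableSet
      have hae1 := ae_restrict_of_ae_restrict_of_subset (T.face_subset_frontier i) haeJ
      have haeφ : ∀ᵐ y ∂(μH[2].restrict (T.face i)),
          (∑ c, ‖evalP (pP i c) y‖ ^ 2) = 0 := by
        filter_upwards [hae1, Filter.eventually_of_mem (self_mem_ae_restrict hfmeas)
          (fun y (hy : y ∈ T.face i) => hy)] with y h1 h2
        have : (∑ c, ‖evalP (pP i c) y‖ ^ 2) = ∑ c, ‖Pu y c‖ ^ 2 :=
          Finset.sum_congr rfl fun c _ => by rw [hpPval i y h2 c]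
        rw [this]
        exact h1
      have hvan := T.eq_zero_of_ae_zero_on_face i hφcont hφnn haeφ
      intro x hx
      have h0 := hvan x hx
      have hsum0 : (∑ c, ‖Pu x c‖ ^ 2) = 0 := by
        rw [← h0]
        exact Finset.sum_congr rfl fun c _ => by rw [hpPval i x hx c]
      funext c
      have := (Finset.sum_eq_zero_iff_of_nonneg (fun c _ => sq_nonneg ‖Pu x c‖)).1 hsum0
        c (Finset.mem_univ c)
      have : ‖Pu x c‖ = 0 := by
        have h := this
        nlinarith [norm_nonneg (Pu x c)]
      simpa using this
    intro x hx
    obtain ⟨s, ⟨i, rfl⟩, hxi⟩ := T.frontier_subset_faces hx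
    exact hface i x hxi
  -- the boundary term vanishes
  have hB0 : B = 0 := by
    have hz : ∀ x ∈ frontier T.K,
        (∑ a, (∑ b, ((τ x a b : ℝ) : ℂ) * starRingEnd ℂ (Pu x b)) * Pu x a) = (0 : ℂ) := by
      intro x hx
      rw [hPuzero x hx]
      simp
    rw [hBdef, setIntegral_congr_fun (g := fun _ => (0:ℂ)) hfront hz]
    simp
  refine ⟨hgoal1, hPuzero, ?_⟩
  -- equality of the norms
  have har : (aNormSqK A T.K σ : ℝ) = rhoNormSqK ρ T.K u := by
    rw [hB0, add_zero] at hgoal1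
    have hIk : (Complex.I * (κ : ℂ)) ≠ 0 :=
      mul_ne_zero Complex.I_ne_zero (Complex.ofReal_ne_zero.2 (ne_of_gt hκ))
    have := (mul_eq_zero.1 hgoal1).resolve_left hIk
    have := sub_eq_zero.1 this
    exact_mod_cast this
  rw [har]
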